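/- For real a > b > 0, L(a,b)/b > 1 + (1/2)ln(a/b) > 2a/(a+b) > ln(a/b) / (2 ln(I(a,b)/b)), where L(a,b) = (a-b)/(ln a - ln b) and I(a,b) = (1/e)(a^a/b^b)^{1/(a-b)}. -/

import Mathlib

open Real Set

-- Lemma A: exp x > 1 + x + x^2/2 for x > 0
lemma lemA (x : ℝ) (hx : 0 < x) : 1 + x + x ^ 2 / 2 < Real.exp x := by
  have mono : StrictMonoOn (fun y => Real.exp y - 1 - y - y ^ 2 / 2) (Set.Ici 0) := by
    apply strictMonoOn_of_deriv_pos (convex_Ici 0)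
    · fun_prop
    · intro y hy
      rw [interior_Ici] at hy
      have hd : HasDerivAt (fun y => Real.exp y - 1 - y - y ^ 2 / 2)
          (Real.exp y - 1 - y) y := by
        have h1 := (((Real.hasDerivAt_exp y).sub_const 1).sub (hasDerivAt_id y)).sub
          ((hasDerivAt_pow 2 y).div_const 2)
        refine h1.congr_deriv ?_
        simp
      rw [hd.deriv]
      have := Real.add_one_lt_exp (ne_of_gt hy)
      linarith
  have := mono (Set.self_mem_Ici) (Set.mem_Ici.mpr hx.le) hx
  simp at this
  linarith

-- Lemma B: exp x - exp (-x) < x * (exp x + exp (-x)) for x > 0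
lemma lemB (x : ℝ) (hx : 0 < x) :
    Real.exp x - Real.exp (-x) < x * (Real.exp x + Real.exp (-x)) := by
  have mono : StrictMonoOn
      (fun y => y * (Real.exp y + Real.exp (-y)) - Real.exp y + Real.exp (-y))
      (Set.Ici 0) := by
    apply strictMonoOn_of_deriv_pos (convex_Ici 0)
    · fun_prop
    · intro y hy
      rw [interior_Ici] at hy
      have hneg : HasDerivAt (fun y : ℝ => Real.exp (-y)) (-Real.exp (-y)) y := by
        exact ((Real.hasDerivAt_exp (-y)).comp y (hasDerivAt_neg y)).congr_deriv (by simp)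
      have hd : HasDerivAt
          (fun y => y * (Real.exp y + Real.exp (-y)) - Real.exp y + Real.exp (-y))
          (y * (Real.exp y - Real.exp (-y))) y := by
        have h1 := (((hasDerivAt_id y).mul ((Real.hasDerivAt_exp y).add hneg)).sub
          (Real.hasDerivAt_exp y)).add hneg
        refine h1.congr_deriv ?_
        simp only [id_eq, Pi.add_apply]; ring
      rw [hd.deriv]
      have hy0 : (0:ℝ) < y := hy
      have h2 : Real.exp (-y) < Real.exp y := Real.exp_lt_exp.mpr (by linarith)
      nlinarith
  have := mono (Set.self_mem_Ici) (Set.mem_Ici.mpr hx.le) hx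
  simp at this
  linarith

-- Lemma C: log t > 4t(t-1)/(3t^2+1) for t > 1
lemma lemC (t : ℝ) (ht : 1 < t) :
    4 * t * (t - 1) / (3 * t ^ 2 + 1) < Real.log t := by
  have mono : StrictMonoOn
      (fun y => Real.log y - 4 * y * (y - 1) / (3 * y ^ 2 + 1)) (Set.Ici 1) := by
    apply strictMonoOn_of_deriv_pos (convex_Ici 1)
    · apply ContinuousOn.sub
      · exact Real.continuousOn_log.mono (by intro y hy; simp at hy ⊢; linarith)
      · apply ContinuousOn.div
        · fun_prop
        · fun_prop
        · intro y hy; simp at hy; positivity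
    · intro y hy
      rw [interior_Ici] at hy
      have hy1 : (1:ℝ) < y := hy
      have hy0 : (0:ℝ) < y := by linarith
      have hden : (3 * y ^ 2 + 1) ≠ 0 := by positivity
      have hd : HasDerivAt (fun y => Real.log y - 4 * y * (y - 1) / (3 * y ^ 2 + 1))
          (1 / y - ((8 * y - 4) * (3 * y ^ 2 + 1) - (4 * y * (y - 1)) * (6 * y)) /
            (3 * y ^ 2 + 1) ^ 2) y := by
        have hlog : HasDerivAt Real.log (1 / y) y := by
          simpa [one_div] using Real.hasDerivAt_log (ne_of_gt hy0)
        have hnum : HasDerivAt (fun y : ℝ => 4 * y * (y - 1)) (8 * y - 4) y := by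
          have : HasDerivAt (fun y : ℝ => 4 * y * (y - 1)) (4 * 1 * (y - 1) + 4 * y * 1) y := by
            exact ((hasDerivAt_id y).const_mul 4).mul ((hasDerivAt_id y).sub_const 1)
          convert this using 1; ring
        have hd2 : HasDerivAt (fun y : ℝ => 3 * y ^ 2 + 1) (6 * y) y := by
          have h := ((hasDerivAt_pow 2 y).const_mul 3).add_const 1
          refine h.congr_deriv ?_
          push_cast; ring
        exact hlog.sub (hnum.div hd2 hden)
      rw [hd.deriv]
      rw [sub_pos, div_lt_div_iff₀ (by positivity) hy0]
      have hpos : 0 < (y - 1) ^ 2 * (3 * y + 1) ^ 2 :=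
        mul_pos (pow_pos (by linarith) 2) (pow_pos (by linarith) 2)
      nlinarith [hpos]
  have := mono (Set.self_mem_Ici) (Set.mem_Ici.mpr ht.le) ht
  simp at this
  linarith

theorem stmt13 (a b : ℝ) (hab : a > b) (hb : b > 0) :
    ((a - b) / (Real.log a - Real.log b)) / b > 1 + (1 / 2) * Real.log (a / b) ∧
    1 + (1 / 2) * Real.log (a / b) > 2 * a / (a + b) ∧
    2 * a / (a + b) >
      Real.log (a / b) /
        (2 * Real.log ((((1 / Real.exp 1) * (a ^ a / b ^ b) ^ (1 / (a - b)))) / b)) := by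
  have ha0 : 0 < a := lt_trans hb hab
  set s := Real.log a - Real.log b with hs_def
  have hs : 0 < s := sub_pos.mpr (Real.log_lt_log hb hab)
  have hlogab : Real.log (a / b) = s := Real.log_div (ne_of_gt ha0) (ne_of_gt hb)
  have hea : Real.exp s = a / b := by
    rw [hs_def, Real.exp_sub, Real.exp_log ha0, Real.exp_log hb]
  have haeq : a = b * Real.exp s := by
    rw [hea]; field_simp
  have hab' : 0 < a - b := sub_pos.mpr hab
  refine ⟨?_, ?_, ?_⟩
  · -- part 1
    rw [hlogab, gt_iff_lt, div_div, lt_div_iff₀ (by positivity)]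
    have h := lemA s hs
    nlinarith [mul_pos hb hs]
  · -- part 2
    rw [hlogab, gt_iff_lt, div_lt_iff₀ (by positivity)]
    have h := lemB (s / 2) (by positivity)
    have hE : Real.exp (s / 2) * Real.exp (s / 2) = Real.exp s := by
      rw [← Real.exp_add]; ring_nf
    have hF : Real.exp (s / 2) * Real.exp (-(s / 2)) = 1 := by
      rw [← Real.exp_add]; simp
    have hEpos := Real.exp_pos (s / 2)
    have key : Real.exp s - 1 < (s / 2) * (Real.exp s + 1) := by
      nlinarith [mul_lt_mul_of_pos_left h hEpos]
    nlinarith [Real.exp_pos s]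
  · -- part 3
    have hX : (0:ℝ) < a ^ a / b ^ b := by positivity
    have hY : (0:ℝ) < (a ^ a / b ^ b) ^ (1 / (a - b)) := Real.rpow_pos_of_pos hX _
    have hD : Real.log ((1 / Real.exp 1 * (a ^ a / b ^ b) ^ (1 / (a - b))) / b)
        = a * s / (a - b) - 1 := by
      rw [Real.log_div (by positivity) (ne_of_gt hb),
        Real.log_mul (by positivity) (ne_of_gt hY),
        Real.log_rpow hX,
        show Real.log (1 / Real.exp 1) = -1 by
          rw [one_div, Real.log_inv, Real.log_exp],
        Real.log_div (by positivity) (by positivity),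
        Real.log_rpow ha0, Real.log_rpow hb]
      field_simp
      ring
    rw [hlogab, hD]
    have hexp : Real.exp s - 1 < s * Real.exp s := by
      have := Real.add_one_lt_exp (x := -s) (by linarith)
      have hE : Real.exp (-s) * Real.exp s = 1 := by rw [← Real.exp_add]; simp
      nlinarith [Real.exp_pos s]
    have hDpos : 0 < a * s / (a - b) - 1 := by
      rw [sub_pos, lt_div_iff₀ hab']
      nlinarith [mul_pos hb hs]
    have ht : 1 < a / b := (one_lt_div hb).mpr hab
    have hC := lemC (a / b) ht
    have htb : (a / b) * b = a := by field_simp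
    have key : 4 * a * (a - b) < s * (3 * a ^ 2 + b ^ 2) := by
      rw [hlogab, div_lt_iff₀ (by positivity)] at hC
      calc 4 * a * (a - b) = 4 * (a / b) * (a / b - 1) * (b * b) := by
            field_simp
        _ < s * (3 * (a / b) ^ 2 + 1) * (b * b) :=
            mul_lt_mul_of_pos_right hC (mul_pos hb hb)
        _ = s * (3 * a ^ 2 + b ^ 2) := by field_simp
    rw [gt_iff_lt, div_lt_div_iff₀ (by positivity) (by positivity)]
    have heq : 2 * a * (2 * (a * s / (a - b) - 1)) = (4 * a ^ 2 * s - 4 * a * (a - b)) / (a - b) := by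
      field_simp; ring
    rw [heq, lt_div_iff₀ hab']
    nlinarith
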